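/- Let K be a totally real number field of degree n ≥ 2 over ℚ, and let σ₁, …, σₙ : K → ℝ be its n distinct real embeddings. Then the image of the ring of integers 𝓞_K under the map x ↦ (σ₂(x), …, σₙ(x)) is dense in ℝ^{n−1}. -/

import Mathlib

open NumberField

/-- For a totally real number field `K` of degree `n ≥ 2`, with real embeddings
`σ₁, …, σₙ`, the image of the ring of integers `𝓞_K` under `x ↦ (σ₂(x), …, σₙ(x))` is
dense in `ℝ^{n−1}`. -/
theorem ring_of_integers_projection_dense (K : Type*) [Field K] [NumberField K]
    (n : ℕ) (hn : 2 ≤ n) (hdeg : Module.finrank ℚ K = n)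
    (σ : Fin n → (K →+* ℝ)) (hinj : Function.Injective σ)
    (hall : ∀ τ : K →+* ℝ, ∃ i, σ i = τ)
    (htotallyReal : ∀ φ : K →+* ℂ, ∀ x : K, (φ x).im = 0) :
    Dense (Set.range fun x : RingOfIntegers K =>
      fun i : Fin (n - 1) =>
        σ ⟨(i : ℕ) + 1, by have := i.isLt; omega⟩ (algebraMap (RingOfIntegers K) K x)) := by
  classical
  -- complexified embeddings
  set σℂ : Fin n → (K →+* ℂ) := fun i => (Complex.ofRealHom).comp (σ i) with hσℂ
  have hσℂinj : Function.Injective σℂ := by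
    intro i j h
    apply hinj
    ext x
    exact Complex.ofReal_inj.mp (RingHom.congr_fun h x)
  have hσℂbij : Function.Bijective σℂ := by
    rw [Fintype.bijective_iff_injective_and_card]
    exact ⟨hσℂinj, by rw [Fintype.card_fin, Embeddings.card K ℂ, hdeg]⟩
  have hσℂreal : ∀ i, ComplexEmbedding.IsReal (σℂ i) := by
    intro i
    rw [ComplexEmbedding.isReal_iff]
    ext x
    rw [ComplexEmbedding.conjugate_coe_eq]
    exact Complex.conj_eq_iff_im.mpr (htotallyReal _ x)
  -- the homs from 𝓞 K to ℝ
  set τ : Fin n → (RingOfIntegers K →+* ℝ) :=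
    fun i => (σ i).comp (algebraMap (RingOfIntegers K) K) with hτ
  -- a ℤ-basis of 𝓞 K indexed by Fin n
  have hcard : Fintype.card (Module.Free.ChooseBasisIndex ℤ (RingOfIntegers K)) = n := by
    rw [← Module.finrank_eq_card_chooseBasisIndex, RingOfIntegers.rank, hdeg]
  let eι := Fintype.equivFinOfCardEq hcard
  set bO : Fin n → RingOfIntegers K :=
    fun k => RingOfIntegers.basis K (eι.symm k) with hbO
  let b : Module.Basis (Fin n) ℚ K := (integralBasis K).reindex eι
  have hb : ∀ k, b k = algebraMap (RingOfIntegers K) K (bO k) := by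
    intro k
    rw [Module.Basis.reindex_apply, integralBasis_apply]
  -- the matrix of embeddings
  set B : Matrix (Fin n) (Fin n) ℝ := fun i k => τ i (bO k) with hB
  have hdetB : B.det ≠ 0 := by
    let e : Fin n ≃ (K →ₐ[ℚ] ℂ) := (Equiv.ofBijective σℂ hσℂbij).trans (RingHom.equivRatAlgHom K ℂ)
    have hdisc : Algebra.discr ℚ (⇑b) ≠ 0 := Algebra.discr_not_zero_of_basis ℚ b
    have h2 := Algebra.discr_eq_det_embeddingsMatrixReindex_pow_two ℚ ℂ (⇑b) e
    have hMdet : (Algebra.embeddingsMatrixReindex ℚ ℂ (⇑b) e).det ≠ 0 := by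
      intro h0
      rw [h0, zero_pow two_ne_zero] at h2
      exact hdisc (by
        have := (map_eq_zero_iff (algebraMap ℚ ℂ)
          (algebraMap ℚ ℂ |>.injective)).mp h2
        exact this)
    have hM : Algebra.embeddingsMatrixReindex ℚ ℂ (⇑b) e
        = (B.map Complex.ofRealHom).transpose := by
      ext i j
      simp only [Algebra.embeddingsMatrixReindex, Algebra.embeddingsMatrix,
        Matrix.reindex_apply, Matrix.submatrix_apply, Matrix.of_apply, Equiv.refl_symm,
        Equiv.refl_apply, Equiv.symm_symm, Matrix.transpose_apply, Matrix.map_apply,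
        Equiv.trans_apply, Equiv.ofBijective_apply, RingHom.equivRatAlgHom_apply, hb, hB, hτ]
      rfl
    intro h0
    apply hMdet
    rw [hM, Matrix.det_transpose, ← RingHom.mapMatrix_apply, ← RingHom.map_det, h0, map_zero]
  -- covering radius
  set R : ℝ := (∑ i, ∑ k, |B i k|) + 1 with hR
  have hRpos : 0 < R := by
    have : (0:ℝ) ≤ ∑ i, ∑ k, |B i k| :=
      Finset.sum_nonneg fun i _ => Finset.sum_nonneg fun k _ => abs_nonneg _
    linarith
  have hcover : ∀ p : Fin n → ℝ, ∃ y : RingOfIntegers K, ∀ i, |τ i y - p i| ≤ R := by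
    intro p
    have hBunit : IsUnit B.det := isUnit_iff_ne_zero.mpr hdetB
    set c : Fin n → ℝ := B⁻¹.mulVec p with hc
    have hpc : B.mulVec c = p := by
      rw [hc, Matrix.mulVec_mulVec, Matrix.mul_nonsing_inv _ hBunit, Matrix.one_mulVec]
    refine ⟨∑ k, round (c k) • bO k, fun i => ?_⟩
    have hτy : τ i (∑ k, round (c k) • bO k) = ∑ k, (round (c k) : ℝ) * B i k := by
      rw [map_sum]
      refine Finset.sum_congr rfl fun k _ => ?_
      rw [zsmul_eq_mul, map_mul, map_intCast]
    have hp_i : p i = ∑ k, c k * B i k := by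
      rw [← hpc]
      simp [Matrix.mulVec, dotProduct, mul_comm]
    rw [hτy, hp_i, ← Finset.sum_sub_distrib]
    calc |∑ k, ((round (c k) : ℝ) * B i k - c k * B i k)|
        ≤ ∑ k, |(round (c k) : ℝ) - c k| * |B i k| := by
          refine (Finset.abs_sum_le_sum_abs _ _).trans ?_
          refine Finset.sum_le_sum fun k _ => ?_
          rw [← sub_mul, abs_mul]
      _ ≤ ∑ k, 1 * |B i k| := by
          refine Finset.sum_le_sum fun k _ => ?_
          refine mul_le_mul_of_nonneg_right ?_ (abs_nonneg _)
          rw [abs_sub_comm]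
          linarith [abs_sub_round (c k)]
      _ = ∑ k, |B i k| := by simp
      _ ≤ ∑ i', ∑ k, |B i' k| :=
          Finset.single_le_sum (f := fun i' => ∑ k, |B i' k|)
            (fun _ _ => Finset.sum_nonneg fun _ _ => abs_nonneg _) (Finset.mem_univ i)
      _ ≤ R := by rw [hR]; linarith
  -- a unit small at all places but the first
  obtain ⟨u, hu⟩ := Units.dirichletUnitTheorem.exists_unit K (InfinitePlace.mk (σℂ ⟨0, by omega⟩))
  set q : Fin n → ℝ := fun i => τ i ((u : RingOfIntegers K)) with hq
  have hq_ne : ∀ i, q i ≠ 0 := fun i => (Units.map (τ i).toMonoidHom u).ne_zero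
  have hwq : ∀ j : Fin n,
      InfinitePlace.mk (σℂ j) (algebraMap (RingOfIntegers K) K (u : RingOfIntegers K))
        = |q j| := by
    intro j
    rw [InfinitePlace.apply]
    show ‖(Complex.ofRealHom (σ j (algebraMap (RingOfIntegers K) K u)))‖ = _
    rw [Complex.ofRealHom_eq_coe, Complex.norm_real, Real.norm_eq_abs]
    rfl
  have hq_lt : ∀ i : Fin n, i ≠ ⟨0, by omega⟩ → |q i| < 1 := by
    intro i hi
    have hne : InfinitePlace.mk (σℂ i) ≠ InfinitePlace.mk (σℂ ⟨0, by omega⟩) := by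
      intro h
      rcases NumberField.InfinitePlace.mk_eq_iff.mp h with h | h
      · exact hi (hσℂinj h)
      · refine hi (hσℂinj ?_)
        rw [← h, ComplexEmbedding.isReal_iff.mp (hσℂreal i)]
    have hlog := hu _ hne
    rw [hwq i] at hlog
    exact (Real.log_neg_iff (abs_pos.mpr (hq_ne i))).mp hlog
  -- the main density argument
  have h1n : (⟨1, by omega⟩ : Fin n) ∈ Finset.univ.erase (⟨0, by omega⟩ : Fin n) := by
    refine Finset.mem_erase.mpr ⟨?_, Finset.mem_univ _⟩
    intro h
    exact absurd (congrArg Fin.val h) (by simp)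
  set S := Finset.univ.erase (⟨0, by omega⟩ : Fin n) with hS
  have hSne : S.Nonempty := ⟨_, h1n⟩
  set ρ : ℝ := S.sup' hSne (fun i => |q i|) with hρ
  have hρ0 : 0 ≤ ρ := le_trans (abs_nonneg (q ⟨1, by omega⟩)) (Finset.le_sup' (fun i => |q i|) h1n)
  have hρ1 : ρ < 1 := (Finset.sup'_lt_iff hSne).mpr
    (fun i hiS => hq_lt i (Finset.mem_erase.mp hiS).1)
  have hρle : ∀ i ∈ S, |q i| ≤ ρ := fun i hiS => Finset.le_sup' (fun i => |q i|) hiS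
  refine Metric.denseRange_iff.mpr fun t ε hε => ?_
  obtain ⟨k, hk⟩ := exists_pow_lt_of_lt_one (div_pos hε hRpos) hρ1
  set p : Fin n → ℝ := fun j => if hj : (j : ℕ) = 0 then 0
    else t ⟨(j : ℕ) - 1, by have := j.isLt; omega⟩ / (q j) ^ k with hp
  obtain ⟨y, hy⟩ := hcover p
  refine ⟨(u : RingOfIntegers K) ^ k * y, ?_⟩
  rw [dist_pi_lt_iff hε]
  intro i
  have hjlt : (i : ℕ) + 1 < n := by have := i.isLt; omega
  set j : Fin n := ⟨(i : ℕ) + 1, hjlt⟩ with hj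
  have hjS : j ∈ S := by
    refine Finset.mem_erase.mpr ⟨?_, Finset.mem_univ _⟩
    intro h
    exact absurd (congrArg Fin.val h) (by simp [hj])
  have hqj : q j ^ k ≠ 0 := pow_ne_zero _ (hq_ne j)
  have hpj : p j = t i / q j ^ k := by
    simp only [hp]
    rw [dif_neg (by simp [hj])]
    have hind : (⟨(j : ℕ) - 1, by have := j.isLt; omega⟩ : Fin (n - 1)) = i := by
      apply Fin.ext
      simp [hj]
    rw [hind]
  have ht : t i = q j ^ k * p j := by
    rw [hpj]
    field_simp
  show dist (t i) (τ j ((u : RingOfIntegers K) ^ k * y)) < ε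
  rw [Real.dist_eq, map_mul, map_pow]
  have hexp : t i - (τ j (u : RingOfIntegers K)) ^ k * τ j y
      = q j ^ k * (p j - τ j y) := by
    rw [ht]; ring
  rw [hexp, abs_mul, abs_pow]
  have h1 : |q j| ^ k ≤ ρ ^ k := pow_le_pow_left₀ (abs_nonneg _) (hρle j hjS) k
  have h2 : |p j - τ j y| ≤ R := by rw [abs_sub_comm]; exact hy j
  calc |q j| ^ k * |p j - τ j y| ≤ ρ ^ k * R :=
        mul_le_mul h1 h2 (abs_nonneg _) (pow_nonneg hρ0 k)
    _ < ε := (lt_div_iff₀ hRpos).mp hk
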